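/- Let Ω be a topological groupoid on B with continuous α, β, inversion, and multiplication, and suppose F : Ω → Ω' is a morphism into a topological groupoid Ω' that is continuous at every unit. If (x_i) is a net in Ω converging to x with α(x_i) = α(x) for all i, then F(x_i) → F(x). -/
import Mathlib


/-- A groupoid on a base `B`: source `α`, target `β`, object inclusion `unit`,
partial multiplication `mul` (with axioms only required on composable pairs),
and inversion `inv`. -/
structure Gpd (Ω : Type*) (B : Type*) where
  α : Ω → B
  β : Ω → B
  unit : B → Ω
  mul : Ω → Ω → Ω
  inv : Ω → Ω
  α_mul : ∀ x y, α x = β y → α (mul x y) = α y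
  β_mul : ∀ x y, α x = β y → β (mul x y) = β x
  mul_assoc : ∀ x y z, α x = β y → α y = β z → mul (mul x y) z = mul x (mul y z)
  α_unit : ∀ u, α (unit u) = u
  β_unit : ∀ u, β (unit u) = u
  mul_unit : ∀ x, mul x (unit (α x)) = x
  unit_mul : ∀ x, mul (unit (β x)) x = x
  α_inv : ∀ x, α (inv x) = β x
  β_inv : ∀ x, β (inv x) = α x
  inv_mul : ∀ x, mul (inv x) x = unit (α x)
  mul_inv : ∀ x, mul x (inv x) = unit (β x)

/-- Key net argument: for a net lying in a single `α`-fibre converging to `x`,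
continuity of a morphism at the units already gives `F(x_i) → F(x)`. -/
theorem stmt8 {Ω B Ω' B' : Type*} [TopologicalSpace Ω] [TopologicalSpace B]
    [TopologicalSpace Ω'] [TopologicalSpace B']
    (G : Gpd Ω B) (G' : Gpd Ω' B')
    (hα : Continuous G.α) (hβ : Continuous G.β) (hunit : Continuous G.unit)
    (hinv : Continuous G.inv)
    (hm : ContinuousOn (fun p : Ω × Ω => G.mul p.1 p.2) {p | G.α p.1 = G.β p.2})
    (hα' : Continuous G'.α) (hβ' : Continuous G'.β) (hunit' : Continuous G'.unit)
    (hinv' : Continuous G'.inv)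
    (hm' : ContinuousOn (fun p : Ω' × Ω' => G'.mul p.1 p.2) {p | G'.α p.1 = G'.β p.2})
    (F : Ω → Ω')
    (hcomp : ∀ x y, G.α x = G.β y → G'.α (F x) = G'.β (F y))
    (hmul : ∀ x y, G.α x = G.β y → F (G.mul x y) = G'.mul (F x) (F y))
    (hcont : ∀ u : B, ContinuousAt F (G.unit u))
    {ι : Type*} (l : Filter ι) [l.NeBot] (x_ : ι → Ω) (x : Ω)
    (hlim : Filter.Tendsto x_ l (nhds x))
    (hfib : ∀ i, G.α (x_ i) = G.α x) :
    Filter.Tendsto (fun i => F (x_ i)) l (nhds (F x)) := by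
  set y : ι → Ω := fun i => G.mul (x_ i) (G.inv x) with hy
  have hcompi : ∀ i, G.α (x_ i) = G.β (G.inv x) := fun i => by
    rw [G.β_inv, hfib]
  -- y i → x * x⁻¹ = unit (β x)
  have h1 : Filter.Tendsto y l (nhds (G.mul x (G.inv x))) := by
    have hpt : G.α x = G.β (G.inv x) := by rw [G.β_inv]
    have hW := (hm (x, G.inv x) hpt).tendsto
    have hn : Filter.Tendsto (fun i => (x_ i, G.inv x)) l
        (nhdsWithin (x, G.inv x) {p : Ω × Ω | G.α p.1 = G.β p.2}) := by
      rw [tendsto_nhdsWithin_iff]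
      exact ⟨hlim.prodMk_nhds tendsto_const_nhds,
        Filter.Eventually.of_forall fun i => hcompi i⟩
    exact hW.comp hn
  rw [G.mul_inv] at h1
  -- F (y i) → F (unit (β x))
  have h2 : Filter.Tendsto (fun i => F (y i)) l (nhds (F (G.unit (G.β x)))) :=
    (hcont (G.β x)).tendsto.comp h1
  have hαy : ∀ i, G.α (y i) = G.β x := fun i => by
    rw [hy]; rw [G.α_mul _ _ (hcompi i), G.α_inv]
  have hαu : G.α (G.unit (G.β x)) = G.β x := G.α_unit _
  -- F (x_ i) = F (y i) * F x
  have hkey : ∀ i, F (x_ i) = G'.mul (F (y i)) (F x) := fun i => by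
    rw [← hmul _ _ (hαy i), hy]
    rw [G.mul_assoc _ _ _ (hcompi i) (by rw [G.α_inv]), G.inv_mul, ← hfib i,
      G.mul_unit]
  have hfinal : Filter.Tendsto (fun i => G'.mul (F (y i)) (F x)) l
      (nhds (G'.mul (F (G.unit (G.β x))) (F x))) := by
    have hpt' : G'.α (F (G.unit (G.β x))) = G'.β (F x) := hcomp _ _ hαu
    have hW := (hm' (F (G.unit (G.β x)), F x) hpt').tendsto
    have hn : Filter.Tendsto (fun i => (F (y i), F x)) l
        (nhdsWithin (F (G.unit (G.β x)), F x) {p : Ω' × Ω' | G'.α p.1 = G'.β p.2}) := by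
      rw [tendsto_nhdsWithin_iff]
      exact ⟨h2.prodMk_nhds tendsto_const_nhds,
        Filter.Eventually.of_forall fun i => hcomp _ _ (hαy i)⟩
    exact hW.comp hn
  have heq : G'.mul (F (G.unit (G.β x))) (F x) = F x := by
    rw [← hmul _ _ hαu, G.unit_mul]
  rw [heq] at hfinal
  exact hfinal.congr fun i => (hkey i).symm
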